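/- Every poset Q equipped with a closure operation c can be order-embedded into a complete lattice with a closure operation, preserving the operation and all existing (possibly infinitary) meets and joins: there exist a complete lattice L, an order embedding ι : Q → L, and a closure operation K on L such that K(ι(q)) = ι(c(q)) for all q ∈ Q; for every S ⊆ Q and q ∈ Q, if q is the least upper bound of S in Q then ι(q) is the least upper bound of ι(S) in L; and if q is the greatest lower bound of S in Q then ι(q) is the greatest lower bound of ι(S) in L. -/

import Mathlib

universe u

namespace DMAux

variable {Q : Type u} [PartialOrder Q]

def IsClosedDM (A : Set Q) : Prop := lowerBounds (upperBounds A) = A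

lemma lowerBounds_isClosedDM (X : Set Q) : IsClosedDM (lowerBounds X) := by
  apply subset_antisymm
  · intro x hx y hy
    exact hx fun z hz => hz hy
  · intro x hx y hy
    exact hy hx

lemma Iic_eq_lowerBounds (q : Q) : Set.Iic q = lowerBounds (Set.Ici q) := by
  ext x; constructor
  · intro hx y hy; exact le_trans hx hy
  · intro hx; exact hx (le_refl q)

lemma Iic_isClosedDM (q : Q) : IsClosedDM (Set.Iic q) := by
  rw [Iic_eq_lowerBounds]; exact lowerBounds_isClosedDM _

def DM (Q : Type u) [PartialOrder Q] : Type u := {A : Set Q // IsClosedDM A}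

instance : PartialOrder (DM Q) := Subtype.partialOrder _

noncomputable instance : InfSet (DM Q) :=
  ⟨fun s => ⟨lowerBounds (⋃ A ∈ s, upperBounds A.1), lowerBounds_isClosedDM _⟩⟩

lemma le_iff {A B : DM Q} : A ≤ B ↔ A.1 ⊆ B.1 := Iff.rfl

lemma sInf_coe (s : Set (DM Q)) :
    (sInf s).1 = ⋂ A ∈ s, A.1 := by
  show lowerBounds (⋃ A ∈ s, upperBounds A.1) = _
  ext x
  simp only [lowerBounds, Set.mem_iUnion, Set.mem_iInter, Set.mem_setOf_eq]
  constructor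
  · intro h A hA
    rw [← A.2]
    intro y hy
    exact h ⟨A, hA, hy⟩
  · rintro h y ⟨A, hA, hy⟩
    have hA' := h A hA
    rw [← A.2] at hA'
    exact hA' hy

noncomputable instance : CompleteLattice (DM Q) :=
  completeLatticeOfInf (DM Q) (by
    intro s
    constructor
    · intro A hA
      rw [le_iff, sInf_coe]
      exact fun x hx => Set.mem_iInter₂.mp hx A hA
    · intro B hB
      rw [le_iff, sInf_coe]
      intro x hx
      exact Set.mem_iInter₂.mpr fun A hA => hB hA hx)

end DMAux

open DMAux

/-- Every poset with a closure operation embeds into a complete lattice with a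
closure operation, preserving the operation and all existing meets and joins. -/
theorem poset_with_closure_embeds_into_complete_lattice {Q : Type u}
    [PartialOrder Q] (c : Q → Q)
    (hext : ∀ q, q ≤ c q) (hmono : Monotone c) (hidem : ∀ q, c (c q) = c q) :
    ∃ (L : Type u) (_ : CompleteLattice L) (ι : Q ↪o L) (K : L → L),
      (∀ x, x ≤ K x) ∧ Monotone K ∧ (∀ x, K (K x) = K x) ∧
      (∀ q, K (ι q) = ι (c q)) ∧
      (∀ (S : Set Q) (q : Q), IsLUB S q → IsLUB (ι '' S) (ι q)) ∧
      (∀ (S : Set Q) (q : Q), IsGLB S q → IsGLB (ι '' S) (ι q)) := by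
  classical
  refine ⟨DM Q, inferInstance, ?_, ?_, ?_, ?_, ?_, ?_, ?_, ?_⟩
  -- the embedding q ↦ Iic q
  · exact { toFun := fun q => ⟨Set.Iic q, Iic_isClosedDM q⟩
            inj' := by
              intro a b h
              have : Set.Iic a = Set.Iic b := congrArg Subtype.val h
              simpa [Set.Iic_inj] using this
            map_rel_iff' := by
              intro a b
              show Set.Iic a ⊆ Set.Iic b ↔ a ≤ b
              exact Set.Iic_subset_Iic }
  -- K
  · exact fun A => ⟨lowerBounds (c '' upperBounds A.1), lowerBounds_isClosedDM _⟩
  -- extensive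
  · intro A
    apply le_iff.mpr
    rintro x hx y ⟨u, hu, rfl⟩
    exact le_trans (hu hx) (hext u)
  -- monotone
  · intro A B hAB
    apply le_iff.mpr
    intro x hx y hy
    apply hx
    obtain ⟨u, hu, rfl⟩ := hy
    exact ⟨u, fun z hz => hu (hAB hz), rfl⟩
  -- idempotent
  · intro A
    apply Subtype.ext
    apply subset_antisymm
    · intro x hx
      rintro y ⟨u, hu, rfl⟩
      have hcu : c u ∈ c '' upperBounds (lowerBounds (c '' upperBounds A.1)) := by
        refine ⟨c u, ?_, hidem u⟩
        intro z hz
        exact hz ⟨u, hu, rfl⟩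
      exact hx hcu
    · rintro x hx y ⟨v, hv, rfl⟩
      refine hx ⟨v, ?_, rfl⟩
      intro a ha
      refine hv ?_
      rintro z ⟨u, hu, rfl⟩
      exact le_trans (hu ha) (hext u)
  -- K ι = ι c
  · intro q
    apply Subtype.ext
    show lowerBounds (c '' upperBounds (Set.Iic q)) = Set.Iic (c q)
    ext x
    constructor
    · intro hx
      exact hx ⟨q, fun y hy => hy, rfl⟩
    · rintro hx y ⟨u, hu, rfl⟩
      exact le_trans hx (hmono (hu (le_refl q)))
  -- LUB
  · intro S q hq
    constructor
    · rintro B ⟨s, hs, rfl⟩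
      rw [le_iff]
      exact Set.Iic_subset_Iic.mpr (hq.1 hs)
    · intro B hB
      rw [le_iff]
      have hqB : q ∈ B.1 := by
        rw [← B.2]
        intro u hu
        apply hq.2
        intro s hs
        have : Set.Iic s ⊆ B.1 := hB ⟨s, hs, rfl⟩
        exact hu (this (le_refl s))
      intro x hx
      rw [← B.2] at hqB ⊢
      intro u hu
      exact le_trans hx (hqB hu)
  -- GLB
  · intro S q hq
    constructor
    · rintro B ⟨s, hs, rfl⟩
      rw [le_iff]
      exact Set.Iic_subset_Iic.mpr (hq.1 hs)
    · intro B hB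
      rw [le_iff]
      intro x hx
      apply hq.2
      intro s hs
      exact hB ⟨s, hs, rfl⟩ hx
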